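/- arXiv:1201.1682 — 2 statements merged into one kernel-verified Lean document; each statement's English description precedes it below -/
import Mathlib

section
/- Let (Ω, β, μ) be a finite measure space and X a reflexive Banach space. If (f_n) ⊂ L_1(Ω, X) converges almost everywhere to f* (in the X-norm) and h(ω) = sup_n ‖f_n(ω)‖_X is integrable, and (F_n) is an increasing sequence of σ-subalgebras with F_n ↑ F_∞, then E(f_{n₁} | F_{n₂}) → E(f* | F_∞) almost everywhere as n₁, n₂ → ∞ independently. -/
open MeasureTheory Filter Topology Set
open scoped ENNReal NNReal symmDiff

namespace LevyAux

variable {Ω X : Type*} {m m0 : MeasurableSpace Ω} {μ : MeasureTheory.Measure Ω}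
variable [NormedAddCommGroup X] [NormedSpace ℝ X] [CompleteSpace X]

lemma condexp_clm (hm : m ≤ m0) [SigmaFinite (μ.trim hm)]
    {f : Ω → X} (hf : Integrable f μ) (L : X →L[ℝ] ℝ) :
    (fun x => L ((μ[f|m]) x)) =ᵐ[μ] μ[fun x => L (f x)|m] := by
  refine ae_eq_condExp_of_forall_setIntegral_eq hm (L.integrable_comp hf)
    (fun s _ _ => (L.integrable_comp integrable_condExp).integrableOn)
    (fun s hs hμs => ?_)
    (StronglyMeasurable.aestronglyMeasurable (L.continuous.comp_stronglyMeasurable stronglyMeasurable_condExp))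
  rw [L.integral_comp_comm integrable_condExp.integrableOn,
    setIntegral_condExp hm hf hs, ← L.integral_comp_comm hf.integrableOn]

lemma norm_condexp_le (hm : m ≤ m0) [SigmaFinite (μ.trim hm)]
    {f : Ω → X} (hf : Integrable f μ) :
    ∀ᵐ x ∂μ, ‖(μ[f|m]) x‖ ≤ (μ[fun y => ‖f y‖|m]) x := by
  obtain ⟨c, hc_count, hc_sub⟩ :=
    ((stronglyMeasurable_condExp (f := f) (m := m)).mono hm).isSeparable_range
  haveI := hc_count.to_subtype
  have hLz : ∀ z : c, ∃ L : X →L[ℝ] ℝ, ‖L‖ ≤ 1 ∧ L z = ‖(z : X)‖ := fun z =>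
    exists_dual_vector'' ℝ (z : X)
  choose L hL1 hL2 using hLz
  have hmain : ∀ z : c, ∀ᵐ x ∂μ, L z ((μ[f|m]) x) ≤ (μ[fun y => ‖f y‖|m]) x := by
    intro z
    have h1 := condexp_clm hm hf (L z)
    have h2 : μ[fun y => L z (f y)|m] ≤ᵐ[μ] μ[fun y => ‖f y‖|m] := by
      refine condExp_mono ((L z).integrable_comp hf) hf.norm
        (Eventually.of_forall fun y => ?_)
      calc L z (f y) ≤ |L z (f y)| := le_abs_self _
        _ = ‖L z (f y)‖ := (Real.norm_eq_abs _).symm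
        _ ≤ 1 * ‖f y‖ := (L z).le_of_opNorm_le (hL1 z) _
        _ = ‖f y‖ := one_mul _
    filter_upwards [h1, h2] with x hx1 hx2
    rw [hx1]; exact hx2
  rw [← ae_all_iff] at hmain
  filter_upwards [hmain] with x hx
  refine le_of_forall_pos_le_add fun ε hε => ?_
  have hmem : (μ[f|m]) x ∈ closure c := hc_sub (mem_range_self x)
  obtain ⟨z, hzc, hz⟩ := Metric.mem_closure_iff.mp hmem (ε / 2) (by positivity)
  have hd : ‖(μ[f|m]) x - z‖ < ε / 2 := by rwa [← dist_eq_norm]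
  have h1 : ‖(μ[f|m]) x‖ ≤ ‖z‖ + ε / 2 := by
    have := norm_sub_norm_le ((μ[f|m]) x) z
    linarith
  have h2 : ‖z‖ ≤ (μ[fun y => ‖f y‖|m]) x + ε / 2 := by
    have he : (‖z‖ : ℝ) = L ⟨z, hzc⟩ ((μ[f|m]) x) + L ⟨z, hzc⟩ (z - (μ[f|m]) x) := by
      rw [← map_add, add_sub_cancel, hL2 ⟨z, hzc⟩]
    have hb := hx ⟨z, hzc⟩
    have h3 : L ⟨z, hzc⟩ (z - (μ[f|m]) x) ≤ ε / 2 := by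
      calc L ⟨z, hzc⟩ (z - (μ[f|m]) x) ≤ |L ⟨z, hzc⟩ (z - (μ[f|m]) x)| := le_abs_self _
        _ = ‖L ⟨z, hzc⟩ (z - (μ[f|m]) x)‖ := (Real.norm_eq_abs _).symm
        _ ≤ 1 * ‖z - (μ[f|m]) x‖ := (L ⟨z, hzc⟩).le_of_opNorm_le (hL1 ⟨z, hzc⟩) _
        _ ≤ ε / 2 := by rw [one_mul, norm_sub_rev]; exact hd.le
    linarith
  linarith



lemma set_approx [IsFiniteMeasure μ] {F : ℕ → MeasurableSpace Ω} (hle : ∀ n, F n ≤ m0)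
    (hmono : Monotone F) {A : Set Ω} (hA : MeasurableSet[⨆ n, F n] A)
    {ε : ℝ≥0∞} (hε : 0 < ε) :
    ∃ n B, MeasurableSet[F n] B ∧ μ (A ∆ B) < ε := by
  have hG : (⨆ n, F n) ≤ m0 := iSup_le hle
  rcases eq_or_ne ε ⊤ with rfl | hεt
  · exact ⟨0, ∅, @MeasurableSet.empty Ω (F 0), by
      simp only [Set.symmDiff_def, Set.diff_empty, Set.empty_diff, Set.union_empty]
      exact measure_lt_top μ _⟩
  let P : Set Ω → Prop := fun A => MeasurableSet[⨆ n, F n] A ∧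
    ∀ δ : ℝ≥0∞, 0 < δ → δ ≠ ⊤ → ∃ n B, MeasurableSet[F n] B ∧ μ (A ∆ B) < δ
  let M : MeasurableSpace Ω :=
    { MeasurableSet' := P
      measurableSet_empty := ⟨@MeasurableSet.empty Ω (⨆ n, F n), fun δ hδ _ =>
        ⟨0, ∅, @MeasurableSet.empty Ω (F 0), by simpa [symmDiff_self, Set.bot_eq_empty] using hδ⟩⟩
      measurableSet_compl := by
        rintro A ⟨hAm, hAa⟩
        refine ⟨hAm.compl, fun δ hδ hδt => ?_⟩
        obtain ⟨n, B, hB, hμB⟩ := hAa δ hδ hδt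
        exact ⟨n, Bᶜ, hB.compl, by rwa [compl_symmDiff_compl]⟩
      measurableSet_iUnion := by
        rintro s hs
        refine ⟨MeasurableSet.iUnion fun i => (hs i).1, fun δ hδ hδt => ?_⟩
        set U := ⋃ i, s i with hU
        have hUm0 : MeasurableSet U := hG _ (MeasurableSet.iUnion fun i => (hs i).1)
        have hsm0 : ∀ i, MeasurableSet (s i) := fun i => hG _ (hs i).1
        set T : ℕ → Set Ω := fun K => ⋃ i ∈ Finset.range K, s i with hT
        have hTm0 : ∀ K, MeasurableSet (T K) := fun K =>
          (Finset.range K).measurableSet_biUnion fun i _ => hsm0 i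
        have hTU : ∀ K, T K ⊆ U := fun K => Set.iUnion₂_subset fun i _ => Set.subset_iUnion s i
        have hanti : Antitone fun K => U \ T K := fun a b hab =>
          Set.diff_subset_diff_right
            (Set.biUnion_subset_biUnion_left (Finset.range_subset_range.2 hab))
        have hInter : ⋂ K, (U \ T K) = (∅ : Set Ω) := by
          apply Set.eq_empty_iff_forall_notMem.mpr
          intro x hx
          have h0 := Set.mem_iInter.mp hx 0
          obtain ⟨i, hi⟩ := Set.mem_iUnion.mp h0.1
          exact (Set.mem_iInter.mp hx (i + 1)).2
            (Set.mem_biUnion (Finset.mem_range.mpr (Nat.lt_succ_self i)) hi)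
        have htend : Tendsto (fun K => μ (U \ T K)) atTop (𝓝 0) := by
          have h := tendsto_measure_iInter_atTop
            (fun K => (hUm0.diff (hTm0 K)).nullMeasurableSet) hanti ⟨0, measure_ne_top μ _⟩
          rw [hInter, measure_empty] at h
          exact h
        have hδ2 : 0 < δ / 2 := ENNReal.div_pos hδ.ne' (by norm_num)
        have hδ2t : δ / 2 ≠ ⊤ := (ENNReal.div_lt_top hδt (by norm_num)).ne
        obtain ⟨K, hK⟩ := (htend.eventually_lt_const hδ2).exists
        have hKδ : 0 < δ / 2 / (K + 1) := ENNReal.div_pos hδ2.ne' (by simp)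
        have hKδt : δ / 2 / (K + 1) ≠ ⊤ :=
          (ENNReal.div_lt_top hδ2t (by simp)).ne
        choose n B hB hμB using fun i : ℕ => (hs i).2 _ hKδ hKδt
        refine ⟨(Finset.range K).sup n, ⋃ i ∈ Finset.range K, B i,
          MeasurableSet.biUnion (Finset.range K).countable_toSet
            (fun i hi => hmono (Finset.le_sup hi) _ (hB i)), ?_⟩
        have hsub1 : U ∆ (⋃ i ∈ Finset.range K, B i) ⊆
            (U \ T K) ∪ ⋃ i ∈ Finset.range K, (s i ∆ B i) := by
          intro x hx
          rw [Set.mem_symmDiff] at hx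
          rcases hx with ⟨hxU, hxB⟩ | ⟨hxB, hxU⟩
          · by_cases hxT : x ∈ T K
            · obtain ⟨i, hi, hxi⟩ := Set.mem_iUnion₂.mp hxT
              refine Or.inr (Set.mem_biUnion hi ?_)
              rw [Set.mem_symmDiff]
              exact Or.inl ⟨hxi, fun hxBi => hxB (Set.mem_biUnion hi hxBi)⟩
            · exact Or.inl ⟨hxU, hxT⟩
          · obtain ⟨i, hi, hxBi⟩ := Set.mem_iUnion₂.mp hxB
            refine Or.inr (Set.mem_biUnion hi ?_)
            rw [Set.mem_symmDiff]
            exact Or.inr ⟨hxBi, fun hxsi => hxU (Set.mem_iUnion.mpr ⟨i, hxsi⟩)⟩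
        have hsum : ∑ i ∈ Finset.range K, δ / 2 / (K + 1) ≤ δ / 2 := by
          rw [Finset.sum_const, Finset.card_range, nsmul_eq_mul]
          calc (K : ℝ≥0∞) * (δ / 2 / (K + 1)) ≤ ((K : ℝ≥0∞) + 1) * (δ / 2 / (K + 1)) :=
              by gcongr; exact le_self_add
            _ ≤ δ / 2 := ENNReal.mul_div_le
        calc μ (U ∆ (⋃ i ∈ Finset.range K, B i))
            ≤ μ ((U \ T K) ∪ ⋃ i ∈ Finset.range K, (s i ∆ B i)) := measure_mono hsub1
          _ ≤ μ (U \ T K) + μ (⋃ i ∈ Finset.range K, (s i ∆ B i)) := measure_union_le _ _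
          _ ≤ μ (U \ T K) + ∑ i ∈ Finset.range K, μ (s i ∆ B i) := by
              exact add_le_add_right (measure_biUnion_finset_le _ _) _
          _ ≤ μ (U \ T K) + ∑ i ∈ Finset.range K, δ / 2 / (K + 1) := by
              exact add_le_add_right (Finset.sum_le_sum fun i _ => (hμB i).le) _
          _ < δ / 2 + δ / 2 :=
              ENNReal.add_lt_add_of_lt_of_le ((hsum.trans_lt (hδ2t.lt_top)).ne) hK hsum
          _ = δ := ENNReal.add_halves δ }
  have hFM : ∀ k, F k ≤ M := fun k A hA =>
    ⟨(le_iSup F k) _ hA, fun δ hδ _ =>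
      ⟨k, A, hA, by simpa [symmDiff_self, Set.bot_eq_empty] using hδ⟩⟩
  exact (iSup_le hFM _ hA).2 ε hε hεt



lemma exists_Fm_approx [IsFiniteMeasure μ] {F : ℕ → MeasurableSpace Ω} (hle : ∀ n, F n ≤ m0)
    (hmono : Monotone F) {g : Ω → X} (hg : Integrable g μ)
    (hgm : StronglyMeasurable[⨆ n, F n] g) {ε : ℝ≥0∞} (hε : 0 < ε) :
    ∃ m t, StronglyMeasurable[F m] t ∧ Integrable t μ ∧
      eLpNorm (fun x => g x - t x) 1 μ < ε := by
  have hG : (⨆ n, F n) ≤ m0 := iSup_le hle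
  rcases eq_or_ne ε ⊤ with rfl | hεt
  · refine ⟨0, fun _ => 0, @stronglyMeasurable_const Ω X (F 0) _ 0, integrable_const 0, ?_⟩
    simpa using (memLp_one_iff_integrable.mpr hg).eLpNorm_lt_top
  have h2 : 0 < ε / 2 := ENNReal.div_pos hε.ne' (by norm_num)
  have h2t : ε / 2 ≠ ⊤ := (ENNReal.div_lt_top hεt (by norm_num)).ne
  -- indicator approximation
  have hind : ∀ (c : X) (A : Set Ω), MeasurableSet[⨆ n, F n] A → ∀ δ : ℝ≥0∞, 0 < δ → δ ≠ ⊤ →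
      ∃ m t, StronglyMeasurable[F m] t ∧ Integrable t μ ∧
        eLpNorm (fun x => A.indicator (fun _ => c) x - t x) 1 μ < δ := by
    intro c A hs δ hδ hδt
    rcases eq_or_ne c 0 with rfl | hc
    · refine ⟨0, fun _ => 0, @stronglyMeasurable_const Ω X (F 0) _ 0,
        integrable_const 0, ?_⟩
      have hz : (fun x => A.indicator (fun _ => (0:X)) x - (fun _ => (0:X)) x)
          = fun _ => (0 : X) := by
        funext x; simp
      rw [hz]
      simpa [eLpNorm_zero] using hδ
    · have hcε : 0 < δ / ‖c‖₊ := ENNReal.div_pos hδ.ne' ENNReal.coe_ne_top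
      obtain ⟨n, B, hB, hμB⟩ := set_approx (μ := μ) hle hmono hs hcε
      refine ⟨n, B.indicator fun _ => c,
        (@stronglyMeasurable_const Ω X (F n) _ c).indicator hB,
        (integrable_const c).indicator (hle n _ hB), ?_⟩
      have hABm : MeasurableSet (A ∆ B) := by
        rw [Set.symmDiff_def]
        exact ((hG _ hs).diff (hle n _ hB)).union ((hle n _ hB).diff (hG _ hs))
      have hpt : ∀ x, (‖A.indicator (fun _ => c) x - B.indicator (fun _ => c) x‖₊ : ℝ≥0∞)
          ≤ (A ∆ B).indicator (fun _ => (‖c‖₊ : ℝ≥0∞)) x := by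
        intro x
        by_cases hxA : x ∈ A <;> by_cases hxB : x ∈ B <;>
          simp [Set.indicator_of_mem, Set.indicator_of_notMem, hxA, hxB,
            Set.mem_symmDiff, nnnorm_neg]
      calc eLpNorm (fun x => A.indicator (fun _ => c) x - B.indicator (fun _ => c) x) 1 μ
          = ∫⁻ x, ‖A.indicator (fun _ => c) x - B.indicator (fun _ => c) x‖₊ ∂μ := by
            rw [eLpNorm_one_eq_lintegral_enorm]; rfl
        _ ≤ ∫⁻ x, (A ∆ B).indicator (fun _ => (‖c‖₊ : ℝ≥0∞)) x ∂μ := lintegral_mono hpt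
        _ = ‖c‖₊ * μ (A ∆ B) := by rw [lintegral_indicator_const hABm]
        _ < ‖c‖₊ * (δ / ‖c‖₊) := by
            exact ENNReal.mul_lt_mul_right (by simpa using hc) ENNReal.coe_ne_top hμB
        _ ≤ δ := ENNReal.mul_div_le
  -- auxiliary: approximation of (⨆ n, F n)-simple functions
  have aux : ∀ s : @SimpleFunc Ω (⨆ n, F n) X, ∀ δ : ℝ≥0∞, 0 < δ → δ ≠ ⊤ →
      ∃ m t, StronglyMeasurable[F m] t ∧ Integrable t μ ∧
        eLpNorm (fun x => (s : Ω → X) x - t x) 1 μ < δ := by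
    intro s
    induction s using SimpleFunc.induction with
    | const c hs =>
      rename_i A
      intro δ hδ hδt
      simp only [SimpleFunc.coe_piecewise, SimpleFunc.coe_const, Set.piecewise_eq_indicator,
        Function.const_zero]
      exact hind c A hs δ hδ hδt
    | add hdisj hf' hg' =>
      rename_i f' g'
      intro δ hδ hδt
      have hd2 : 0 < δ / 2 := ENNReal.div_pos hδ.ne' (by norm_num)
      have hd2t : δ / 2 ≠ ⊤ := (ENNReal.div_lt_top hδt (by norm_num)).ne
      obtain ⟨m₁, t₁, ht₁m, ht₁i, ht₁⟩ := hf' _ hd2 hd2t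
      obtain ⟨m₂, t₂, ht₂m, ht₂i, ht₂⟩ := hg' _ hd2 hd2t
      refine ⟨max m₁ m₂, fun x => t₁ x + t₂ x,
        (ht₁m.mono (hmono (le_max_left _ _))).add (ht₂m.mono (hmono (le_max_right _ _))),
        ht₁i.add ht₂i, ?_⟩
      have hre : (fun x => ((f' + g' : @SimpleFunc Ω (⨆ n, F n) X) : Ω → X) x
          - (t₁ x + t₂ x))
          = fun x => ((f' : Ω → X) x - t₁ x) + ((g' : Ω → X) x - t₂ x) := by
        funext x
        simp only [SimpleFunc.coe_add, Pi.add_apply]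
        abel
      rw [hre]
      calc eLpNorm (fun x => ((f' : Ω → X) x - t₁ x) + ((g' : Ω → X) x - t₂ x)) 1 μ
          ≤ eLpNorm (fun x => (f' : Ω → X) x - t₁ x) 1 μ
            + eLpNorm (fun x => (g' : Ω → X) x - t₂ x) 1 μ :=
            eLpNorm_add_le
              (((f'.stronglyMeasurable.mono hG).sub (ht₁m.mono (hle m₁))).aestronglyMeasurable)
              (((g'.stronglyMeasurable.mono hG).sub (ht₂m.mono (hle m₂))).aestronglyMeasurable)
              le_rfl
        _ < δ / 2 + δ / 2 := ENNReal.add_lt_add ht₁ ht₂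
        _ = δ := ENNReal.add_halves δ
  -- use simple function density in L¹ of the trimmed measure
  haveI : IsFiniteMeasure (μ.trim hG) := isFiniteMeasure_trim hG
  have hgν : Integrable g (μ.trim hG) := hg.trim hG hgm
  have hs0ex : ∃ s : @SimpleFunc Ω (⨆ n, F n) X,
      eLpNorm (g - (s : Ω → X)) 1 (μ.trim hG) < ε / 2 := by
    letI : MeasurableSpace Ω := ⨆ n, F n
    obtain ⟨s0, hs0lt, -⟩ := ((memLp_one_iff_integrable (μ := μ.trim hG)).mpr
      hgν).exists_simpleFunc_eLpNorm_sub_lt ENNReal.one_ne_top h2.ne'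
    exact ⟨s0, hs0lt⟩
  obtain ⟨s0, hs0lt⟩ := hs0ex
  have hs0μ : eLpNorm (fun x => g x - (s0 : Ω → X) x) 1 μ < ε / 2 := by
    have heq : eLpNorm (g - (s0 : Ω → X)) 1 (μ.trim hG) = eLpNorm (g - (s0 : Ω → X)) 1 μ :=
      eLpNorm_trim hG (hgm.sub s0.stronglyMeasurable)
    have : eLpNorm (g - (s0 : Ω → X)) 1 μ < ε / 2 := heq ▸ hs0lt
    exact this
  obtain ⟨m, t, htm, hti, htlt⟩ := aux s0 (ε / 2) h2 h2t
  refine ⟨m, t, htm, hti, ?_⟩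
  have hre : (fun x => g x - t x)
      = fun x => (g x - (s0 : Ω → X) x) + ((s0 : Ω → X) x - t x) := by
    funext x; abel
  rw [hre]
  calc eLpNorm (fun x => (g x - (s0 : Ω → X) x) + ((s0 : Ω → X) x - t x)) 1 μ
      ≤ eLpNorm (fun x => g x - (s0 : Ω → X) x) 1 μ
        + eLpNorm (fun x => (s0 : Ω → X) x - t x) 1 μ :=
        eLpNorm_add_le
          (((hgm.sub s0.stronglyMeasurable).mono hG).aestronglyMeasurable)
          (((s0.stronglyMeasurable.mono hG).sub (htm.mono (hle m))).aestronglyMeasurable)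
          le_rfl
    _ < ε / 2 + ε / 2 := ENNReal.add_lt_add hs0μ htlt
    _ = ε := ENNReal.add_halves ε

set_option maxHeartbeats 1000000 in
lemma tendsto_ae_condexp_vector [IsFiniteMeasure μ] {F : ℕ → MeasurableSpace Ω}
    (hle : ∀ n, F n ≤ m0) (hmono : Monotone F) {g : Ω → X} (hg : Integrable g μ) :
    ∀ᵐ x ∂μ, Tendsto (fun n => (μ[g|F n]) x) atTop (𝓝 ((μ[g|⨆ n, F n]) x)) := by
  have hG : (⨆ n, F n) ≤ m0 := iSup_le hle
  haveI : SigmaFinite (μ.trim hG) := by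
    haveI := isFiniteMeasure_trim (μ := μ) hG; infer_instance
  have hsfn : ∀ n, SigmaFinite (μ.trim (hle n)) := fun n => by
    haveI := isFiniteMeasure_trim (μ := μ) (hle n); infer_instance
  set g' := μ[g|⨆ n, F n] with hg'def
  have hg'i : Integrable g' μ := integrable_condExp
  have hg'm : StronglyMeasurable[⨆ n, F n] g' := stronglyMeasurable_condExp
  let ℱ : Filtration ℕ m0 := ⟨F, hmono, hle⟩
  -- main statement for g'
  have hmain : ∀ᵐ x ∂μ, Tendsto (fun n => (μ[g'|F n]) x) atTop (𝓝 (g' x)) := by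
    have hexists : ∀ k : ℕ, ∃ m t, StronglyMeasurable[F m] t ∧ Integrable t μ ∧
        eLpNorm (fun x => g' x - t x) 1 μ < (2⁻¹ : ℝ≥0∞) ^ k := fun k =>
      exists_Fm_approx hle hmono hg'i hg'm
        (ENNReal.pow_pos (ENNReal.inv_pos.mpr ENNReal.ofNat_ne_top) k)
    choose m s hsm hsi hslt using hexists
    set u : ℕ → Ω → ℝ≥0∞ := fun k x =>
      ENNReal.ofReal ((μ[fun y => ‖g' y - s k y‖|⨆ n, F n]) x)
        + ENNReal.ofReal ‖g' x - s k x‖ with hu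
    have hu_meas : ∀ k, Measurable (u k) := fun k =>
      ((stronglyMeasurable_condExp.mono hG).measurable.ennreal_ofReal).add
        (((hg'm.sub ((hsm k).mono (le_iSup F (m k)))).mono hG).norm.measurable.ennreal_ofReal)
    have hu_int : ∀ k, ∫⁻ x, u k x ∂μ ≤ 2 * (2⁻¹ : ℝ≥0∞) ^ k := by
      intro k
      have hnormint : Integrable (fun y => ‖g' y - s k y‖) μ := (hg'i.sub (hsi k)).norm
      have hnn : 0 ≤ᵐ[μ] fun y => ‖g' y - s k y‖ := Eventually.of_forall fun y => norm_nonneg _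
      have e1 : ∫⁻ x, ENNReal.ofReal ((μ[fun y => ‖g' y - s k y‖|⨆ n, F n]) x) ∂μ
          = ENNReal.ofReal (∫ x, (μ[fun y => ‖g' y - s k y‖|⨆ n, F n]) x ∂μ) :=
        (ofReal_integral_eq_lintegral_ofReal integrable_condExp (condExp_nonneg hnn)).symm
      have e2 : ∫ x, (μ[fun y => ‖g' y - s k y‖|⨆ n, F n]) x ∂μ = ∫ x, ‖g' x - s k x‖ ∂μ :=
        integral_condExp hG
      have e3 : ENNReal.ofReal (∫ x, ‖g' x - s k x‖ ∂μ)
          = ∫⁻ x, ENNReal.ofReal ‖g' x - s k x‖ ∂μ :=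
        ofReal_integral_eq_lintegral_ofReal hnormint hnn
      have e4 : ∫⁻ x, ENNReal.ofReal ‖g' x - s k x‖ ∂μ
          = eLpNorm (fun x => g' x - s k x) 1 μ := by
        rw [eLpNorm_one_eq_lintegral_enorm]
        simp_rw [ofReal_norm]
      calc ∫⁻ x, u k x ∂μ
          = ∫⁻ x, ENNReal.ofReal ((μ[fun y => ‖g' y - s k y‖|⨆ n, F n]) x) ∂μ
            + ∫⁻ x, ENNReal.ofReal ‖g' x - s k x‖ ∂μ :=
            lintegral_add_left'
              ((stronglyMeasurable_condExp.mono hG).measurable.ennreal_ofReal.aemeasurable) _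
        _ = eLpNorm (fun x => g' x - s k x) 1 μ + eLpNorm (fun x => g' x - s k x) 1 μ := by
            rw [e1, e2, e3, e4]
        _ ≤ 2 * (2⁻¹ : ℝ≥0∞) ^ k := by
            rw [two_mul]; exact add_le_add (hslt k).le (hslt k).le
    set V : Ω → ℝ≥0∞ := fun x => ⨅ k, u k x with hV
    have hVmeas : Measurable V := Measurable.iInf hu_meas
    have hVint : ∫⁻ x, V x ∂μ = 0 := by
      refine le_antisymm ?_ zero_le
      have hlim : Tendsto (fun k : ℕ => 2 * (2⁻¹ : ℝ≥0∞) ^ k) atTop (𝓝 0) := by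
        have h := ENNReal.tendsto_pow_atTop_nhds_zero_of_lt_one
          (by norm_num : (2⁻¹ : ℝ≥0∞) < 1)
        simpa using ENNReal.Tendsto.const_mul h (Or.inr ENNReal.ofNat_ne_top)
      refine ge_of_tendsto' hlim fun k => ?_
      exact le_trans (lintegral_mono fun x => iInf_le _ k) (hu_int k)
    have hV0 : ∀ᵐ x ∂μ, V x = 0 := (lintegral_eq_zero_iff hVmeas).mp hVint
    -- per-k a.e. bound for the limsup
    have hk_ae : ∀ k : ℕ, ∀ᵐ x ∂μ,
        Filter.limsup (fun n => (‖(μ[g'|F n]) x - g' x‖₊ : ℝ≥0∞)) atTop ≤ u k x := by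
      intro k
      have e1 : ∀ n : ℕ, ∀ᵐ x ∂μ, ‖(μ[fun y => g' y - s k y|F n]) x‖
          ≤ (μ[fun y => ‖g' y - s k y‖|F n]) x := fun n => by
        haveI := hsfn n; exact norm_condexp_le (hle n) (hg'i.sub (hsi k))
      have e2 : ∀ n : ℕ, ∀ᵐ x ∂μ, (μ[fun y => g' y - s k y|F n]) x
          = (μ[g'|F n]) x - (μ[s k|F n]) x := fun n => by
        haveI := hsfn n
        filter_upwards [condExp_sub hg'i (hsi k) (m := F n)] with x hx
        exact hx
      have e4 := tendsto_ae_condExp (μ := μ) (ℱ := ℱ) fun y => ‖g' y - s k y‖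
      filter_upwards [ae_all_iff.2 e1, ae_all_iff.2 e2, e4] with x h1 h2 h4
      have hbound : ∀ n, m k ≤ n → (‖(μ[g'|F n]) x - g' x‖₊ : ℝ≥0∞)
          ≤ ENNReal.ofReal ((μ[fun y => ‖g' y - s k y‖|F n]) x + ‖g' x - s k x‖) := by
        intro n hn
        haveI := hsfn n
        have he3 : (μ[s k|F n]) = s k :=
          condExp_of_stronglyMeasurable (hle n) ((hsm k).mono (hmono hn)) (hsi k)
        have hx2 := h2 n
        rw [he3] at hx2
        have heq : (μ[g'|F n]) x - g' x
            = (μ[fun y => g' y - s k y|F n]) x + (s k x - g' x) := by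
          rw [hx2]; abel
        rw [← ENNReal.ofReal_coe_nnreal, coe_nnnorm]
        apply ENNReal.ofReal_le_ofReal
        calc ‖(μ[g'|F n]) x - g' x‖
            ≤ ‖(μ[fun y => g' y - s k y|F n]) x‖ + ‖s k x - g' x‖ := by
              rw [heq]; exact norm_add_le _ _
          _ ≤ (μ[fun y => ‖g' y - s k y‖|F n]) x + ‖g' x - s k x‖ :=
              add_le_add (h1 n) (by rw [norm_sub_rev])
      have htend : Tendsto (fun n => ENNReal.ofReal
          ((μ[fun y => ‖g' y - s k y‖|F n]) x + ‖g' x - s k x‖)) atTop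
          (𝓝 (ENNReal.ofReal ((μ[fun y => ‖g' y - s k y‖|⨆ n, F n]) x + ‖g' x - s k x‖))) :=
        (ENNReal.continuous_ofReal.tendsto _).comp (h4.add tendsto_const_nhds)
      calc Filter.limsup (fun n => (‖(μ[g'|F n]) x - g' x‖₊ : ℝ≥0∞)) atTop
          ≤ Filter.limsup (fun n => ENNReal.ofReal
            ((μ[fun y => ‖g' y - s k y‖|F n]) x + ‖g' x - s k x‖)) atTop :=
            limsup_le_limsup (eventually_atTop.2 ⟨m k, hbound⟩)
        _ = ENNReal.ofReal ((μ[fun y => ‖g' y - s k y‖|⨆ n, F n]) x + ‖g' x - s k x‖) :=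
            htend.limsup_eq
        _ ≤ u k x := ENNReal.ofReal_add_le
    filter_upwards [ae_all_iff.2 hk_ae, hV0] with x hx hVx
    have hlim0 : Filter.limsup (fun n => (‖(μ[g'|F n]) x - g' x‖₊ : ℝ≥0∞)) atTop = 0 :=
      le_antisymm (le_trans (le_iInf hx) hVx.le) zero_le
    have h1 : Tendsto (fun n => (‖(μ[g'|F n]) x - g' x‖₊ : ℝ≥0∞)) atTop (𝓝 0) := by
      rw [ENNReal.tendsto_nhds_zero]
      intro ε hε
      exact (eventually_lt_of_limsup_lt (hlim0 ▸ hε)).mono fun n hn => hn.le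
    have h2 : Tendsto (fun n => ‖(μ[g'|F n]) x - g' x‖) atTop (𝓝 0) := by
      have h := (ENNReal.tendsto_toReal ENNReal.zero_ne_top).comp h1
      simpa [Function.comp_def] using h
    exact tendsto_iff_norm_sub_tendsto_zero.mpr h2
  have htower : ∀ n : ℕ, μ[g'|F n] =ᵐ[μ] μ[g|F n] := fun n => by
    haveI := hsfn n
    exact condExp_condExp_of_le (le_iSup F n) hG
  filter_upwards [hmain, ae_all_iff.2 htower] with x hx hxt
  exact hx.congr hxt

end LevyAux

set_option maxHeartbeats 1600000 in
/-- If `f n → fstar` a.e. with integrable supremum `⨆ n, ‖f n ω‖`, and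
`F n ↑ Finf` is an increasing sequence of σ-subalgebras, then
`E(f n₁ | F n₂) → E(fstar | Finf)` a.e. as `n₁, n₂ → ∞` independently. -/
theorem stmt1 {Ω X : Type*} [MeasurableSpace Ω] [NormedAddCommGroup X] [NormedSpace ℝ X]
    [CompleteSpace X]
    (hX : Function.Surjective (NormedSpace.inclusionInDoubleDual ℝ X))
    (μ : Measure Ω) [IsFiniteMeasure μ]
    (f : ℕ → Ω → X) (fstar : Ω → X)
    (hf : ∀ n, Integrable (f n) μ) (hfstar : Integrable fstar μ)
    (h_ae : ∀ᵐ ω ∂μ, Tendsto (fun n => f n ω) atTop (𝓝 (fstar ω)))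
    (hsup : Integrable (fun ω => ⨆ n, ‖f n ω‖) μ)
    (F : ℕ → MeasurableSpace Ω) (hle : ∀ n, F n ≤ ‹MeasurableSpace Ω›)
    (hmono : Monotone F)
    (Finf : MeasurableSpace Ω) (hFinf : Finf = ⨆ n, F n) :
    ∀ᵐ ω ∂μ, Tendsto (fun q : ℕ × ℕ => (μ[f q.1 | F q.2]) ω) atTop
      (𝓝 ((μ[fstar | Finf]) ω)) := by
  subst hFinf
  have hG : (⨆ n, F n) ≤ ‹MeasurableSpace Ω› := iSup_le hle
  haveI : SigmaFinite (μ.trim hG) := by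
    haveI := isFiniteMeasure_trim (μ := μ) hG; infer_instance
  have hsfn : ∀ n, SigmaFinite (μ.trim (hle n)) := fun n => by
    haveI := isFiniteMeasure_trim (μ := μ) (hle n); infer_instance
  let ℱ : Filtration ℕ ‹MeasurableSpace Ω› := ⟨F, hmono, hle⟩
  set hEnv : Ω → ℝ := fun ω => ⨆ n, ‖f n ω‖ with hEnvdef
  set e : ℕ → Ω → ℝ≥0∞ := fun N x => ⨆ k, (‖f (k + N) x - fstar x‖₊ : ℝ≥0∞) with hedef
  set GN : ℕ → Ω → ℝ := fun N x => (e N x).toReal with hGNdef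
  have hbdd : ∀ᵐ x ∂μ, BddAbove (Set.range fun n => ‖f n x‖) :=
    h_ae.mono fun x hx => hx.norm.bddAbove_range
  have hle_h : ∀ᵐ x ∂μ, ∀ n, ‖f n x‖ ≤ hEnv x :=
    hbdd.mono fun x hx n => le_ciSup hx n
  have hstar_le : ∀ᵐ x ∂μ, ‖fstar x‖ ≤ hEnv x := by
    filter_upwards [h_ae, hle_h] with x hx hxn
    exact le_of_tendsto hx.norm (Eventually.of_forall hxn)
  have he_fin : ∀ᵐ x ∂μ, ∀ N, e N x ≤ ENNReal.ofReal (2 * hEnv x) := by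
    filter_upwards [hle_h, hstar_le] with x hx hxs N
    refine iSup_le fun k => ?_
    rw [← ENNReal.ofReal_coe_nnreal, coe_nnnorm]
    apply ENNReal.ofReal_le_ofReal
    calc ‖f (k + N) x - fstar x‖ ≤ ‖f (k + N) x‖ + ‖fstar x‖ := norm_sub_le _ _
      _ ≤ hEnv x + hEnv x := add_le_add (hx _) hxs
      _ = 2 * hEnv x := (two_mul _).symm
  have hGN_le : ∀ᵐ x ∂μ, ∀ N, GN N x ≤ 2 * hEnv x := by
    filter_upwards [he_fin, hle_h] with x hx hxn N
    have h0 : (0 : ℝ) ≤ 2 * hEnv x := by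
      have := (norm_nonneg (f 0 x)).trans (hxn 0); linarith
    exact ENNReal.toReal_le_of_le_ofReal h0 (hx N)
  have hGNmeas : ∀ N, AEStronglyMeasurable (GN N) μ := by
    intro N
    have hae : AEMeasurable (e N) μ :=
      AEMeasurable.iSup fun k => ((hf (k + N)).1.sub hfstar.1).enorm
    exact (ENNReal.measurable_toReal.comp_aemeasurable hae).aestronglyMeasurable
  have hGNint : ∀ N, Integrable (GN N) μ := by
    intro N
    refine Integrable.mono' (hsup.const_mul 2) (hGNmeas N) ?_
    filter_upwards [hGN_le] with x hx
    rw [Real.norm_eq_abs, abs_of_nonneg ENNReal.toReal_nonneg]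
    exact hx N
  have hfn_le : ∀ᵐ x ∂μ, ∀ N n, N ≤ n → ‖f n x - fstar x‖ ≤ GN N x := by
    filter_upwards [he_fin] with x hx N n hn
    have h1 : (‖f n x - fstar x‖₊ : ℝ≥0∞) ≤ e N x := by
      have h2 := le_iSup (fun k => (‖f (k + N) x - fstar x‖₊ : ℝ≥0∞)) (n - N)
      rwa [Nat.sub_add_cancel hn] at h2
    have h2 : e N x ≠ ⊤ := ((hx N).trans_lt ENNReal.ofReal_lt_top).ne
    have h3 := ENNReal.toReal_mono h2 h1
    simpa using h3
  have hGN_tendsto : ∀ᵐ x ∂μ, Tendsto (fun N => GN N x) atTop (𝓝 0) := by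
    filter_upwards [h_ae] with x hx
    refine Metric.tendsto_atTop.mpr fun ε hε => ?_
    obtain ⟨N₀, hN₀⟩ := Metric.tendsto_atTop.mp hx (ε / 2) (half_pos hε)
    refine ⟨N₀, fun N hN => ?_⟩
    have hb : e N x ≤ ENNReal.ofReal (ε / 2) := by
      refine iSup_le fun k => ?_
      rw [← ENNReal.ofReal_coe_nnreal, coe_nnnorm]
      refine ENNReal.ofReal_le_ofReal ?_
      have hd := hN₀ (k + N) (hN.trans (Nat.le_add_left N k))
      rw [dist_eq_norm] at hd
      exact hd.le
    have hGb : GN N x ≤ ε / 2 := ENNReal.toReal_le_of_le_ofReal (half_pos hε).le hb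
    rw [Real.dist_eq, sub_zero, abs_of_nonneg ENNReal.toReal_nonneg]
    exact lt_of_le_of_lt hGb (half_lt_self hε)
  have hint_tend : Tendsto (fun N => ∫ x, GN N x ∂μ) atTop (𝓝 0) := by
    have h0 : (0 : ℝ) = ∫ _x, (0 : ℝ) ∂μ := by simp
    rw [h0]
    exact tendsto_integral_of_dominated_convergence _ hGNmeas (hsup.const_mul 2)
      (fun N => by
        filter_upwards [hGN_le] with x hx
        rw [Real.norm_eq_abs, abs_of_nonneg ENNReal.toReal_nonneg]; exact hx N)
      (by filter_upwards [hGN_tendsto] with x hx; exact hx)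
  -- conditional expectation facts
  have B1 : ∀ n₁ n₂ : ℕ, ∀ᵐ x ∂μ, ‖(μ[fun y => f n₁ y - fstar y|F n₂]) x‖
      ≤ (μ[fun y => ‖f n₁ y - fstar y‖|F n₂]) x := fun n₁ n₂ => by
    haveI := hsfn n₂
    exact LevyAux.norm_condexp_le (hle n₂) ((hf n₁).sub hfstar)
  have B2 : ∀ n₁ n₂ : ℕ, ∀ᵐ x ∂μ, (μ[fun y => f n₁ y - fstar y|F n₂]) x
      = (μ[f n₁|F n₂]) x - (μ[fstar|F n₂]) x := fun n₁ n₂ => by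
    haveI := hsfn n₂
    filter_upwards [condExp_sub (hf n₁) hfstar (m := F n₂)] with x hx
    exact hx
  have B3 : ∀ N n₁ n₂ : ℕ, N ≤ n₁ → (μ[fun y => ‖f n₁ y - fstar y‖|F n₂])
      ≤ᵐ[μ] μ[GN N|F n₂] := fun N n₁ n₂ hN => by
    haveI := hsfn n₂
    exact condExp_mono ((hf n₁).sub hfstar).norm (hGNint N)
      (hfn_le.mono fun x hx => hx N n₁ hN)
  have B4 : ∀ N : ℕ, ∀ᵐ x ∂μ, Tendsto (fun n₂ => (μ[GN N|F n₂]) x) atTop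
      (𝓝 ((μ[GN N|⨆ n, F n]) x)) := fun N =>
    tendsto_ae_condExp (μ := μ) (ℱ := ℱ) (GN N)
  have B5 : ∀ᵐ x ∂μ, Tendsto (fun n₂ => (μ[fstar|F n₂]) x) atTop
      (𝓝 ((μ[fstar|⨆ n, F n]) x)) := LevyAux.tendsto_ae_condexp_vector hle hmono hfstar
  have hsnd : Tendsto (Prod.snd : ℕ × ℕ → ℕ) atTop atTop := by
    rw [← prod_atTop_atTop_eq]; exact tendsto_snd
  have claim : ∀ N : ℕ, ∀ᵐ x ∂μ,
      Filter.limsup (fun q : ℕ × ℕ =>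
        (‖(μ[f q.1|F q.2]) x - (μ[fstar|⨆ n, F n]) x‖₊ : ℝ≥0∞)) atTop
      ≤ ENNReal.ofReal ((μ[GN N|⨆ n, F n]) x) := by
    intro N
    have hB3' : ∀ᵐ x ∂μ, ∀ n₁ n₂, N ≤ n₁ →
        (μ[fun y => ‖f n₁ y - fstar y‖|F n₂]) x ≤ (μ[GN N|F n₂]) x := by
      rw [ae_all_iff]; intro n₁
      rw [ae_all_iff]; intro n₂
      rcases le_or_gt N n₁ with hN | hN
      · exact (B3 N n₁ n₂ hN).mono fun x hx _ => hx
      · exact Eventually.of_forall fun x hx => absurd hx (by omega)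
    filter_upwards [ae_all_iff.2 fun n₁ => ae_all_iff.2 fun n₂ => B1 n₁ n₂,
      ae_all_iff.2 fun n₁ => ae_all_iff.2 fun n₂ => B2 n₁ n₂,
      hB3', B4 N, B5] with x h1 h2 h3 h4 h5
    have hev : ∀ᶠ q : ℕ × ℕ in atTop,
        (‖(μ[f q.1|F q.2]) x - (μ[fstar|⨆ n, F n]) x‖₊ : ℝ≥0∞)
        ≤ ENNReal.ofReal ((μ[GN N|F q.2]) x
            + ‖(μ[fstar|F q.2]) x - (μ[fstar|⨆ n, F n]) x‖) := by
      have hq1 : ∀ᶠ q : ℕ × ℕ in atTop, N ≤ q.1 := by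
        rw [← prod_atTop_atTop_eq]
        exact (eventually_ge_atTop N).prod_inl atTop
      filter_upwards [hq1] with q hq
      rw [← ENNReal.ofReal_coe_nnreal, coe_nnnorm]
      apply ENNReal.ofReal_le_ofReal
      calc ‖(μ[f q.1|F q.2]) x - (μ[fstar|⨆ n, F n]) x‖
          ≤ ‖(μ[f q.1|F q.2]) x - (μ[fstar|F q.2]) x‖
            + ‖(μ[fstar|F q.2]) x - (μ[fstar|⨆ n, F n]) x‖ := by
            have hre : (μ[f q.1|F q.2]) x - (μ[fstar|⨆ n, F n]) x
                = ((μ[f q.1|F q.2]) x - (μ[fstar|F q.2]) x)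
                  + ((μ[fstar|F q.2]) x - (μ[fstar|⨆ n, F n]) x) := by abel
            rw [hre]; exact norm_add_le _ _
        _ ≤ (μ[GN N|F q.2]) x + ‖(μ[fstar|F q.2]) x - (μ[fstar|⨆ n, F n]) x‖ := by
            refine add_le_add ?_ le_rfl
            rw [← h2 q.1 q.2]
            exact (h1 q.1 q.2).trans (h3 q.1 q.2 hq)
    have htend : Tendsto (fun q : ℕ × ℕ => ENNReal.ofReal ((μ[GN N|F q.2]) x
        + ‖(μ[fstar|F q.2]) x - (μ[fstar|⨆ n, F n]) x‖)) atTop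
        (𝓝 (ENNReal.ofReal ((μ[GN N|⨆ n, F n]) x))) := by
      have hpt : Tendsto (fun n₂ => (μ[GN N|F n₂]) x
          + ‖(μ[fstar|F n₂]) x - (μ[fstar|⨆ n, F n]) x‖) atTop
          (𝓝 ((μ[GN N|⨆ n, F n]) x + 0)) :=
        h4.add (tendsto_iff_norm_sub_tendsto_zero.mp h5)
      rw [add_zero] at hpt
      exact (ENNReal.continuous_ofReal.tendsto _).comp (hpt.comp hsnd)
    calc Filter.limsup (fun q : ℕ × ℕ =>
        (‖(μ[f q.1|F q.2]) x - (μ[fstar|⨆ n, F n]) x‖₊ : ℝ≥0∞)) atTop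
        ≤ Filter.limsup (fun q : ℕ × ℕ => ENNReal.ofReal ((μ[GN N|F q.2]) x
            + ‖(μ[fstar|F q.2]) x - (μ[fstar|⨆ n, F n]) x‖)) atTop :=
          limsup_le_limsup hev
      _ = ENNReal.ofReal ((μ[GN N|⨆ n, F n]) x) := htend.limsup_eq
  set W : Ω → ℝ≥0∞ := fun x => ⨅ N, ENNReal.ofReal ((μ[GN N|⨆ n, F n]) x) with hWdef
  have hWmeas : Measurable W := Measurable.iInf fun N =>
    (stronglyMeasurable_condExp.mono hG).measurable.ennreal_ofReal
  have hWint : ∫⁻ x, W x ∂μ = 0 := by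
    refine le_antisymm ?_ zero_le
    have hNbound : ∀ N, ∫⁻ x, W x ∂μ ≤ ENNReal.ofReal (∫ x, GN N x ∂μ) := by
      intro N
      have hcnn : 0 ≤ᵐ[μ] μ[GN N|⨆ n, F n] :=
        condExp_nonneg (Eventually.of_forall fun x => ENNReal.toReal_nonneg)
      calc ∫⁻ x, W x ∂μ ≤ ∫⁻ x, ENNReal.ofReal ((μ[GN N|⨆ n, F n]) x) ∂μ :=
          lintegral_mono fun x => iInf_le _ N
        _ = ENNReal.ofReal (∫ x, (μ[GN N|⨆ n, F n]) x ∂μ) :=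
          (ofReal_integral_eq_lintegral_ofReal integrable_condExp hcnn).symm
        _ = ENNReal.ofReal (∫ x, GN N x ∂μ) := by rw [integral_condExp hG]
    have htd : Tendsto (fun N => ENNReal.ofReal (∫ x, GN N x ∂μ)) atTop (𝓝 0) := by
      have h := ENNReal.tendsto_ofReal hint_tend
      simpa using h
    exact ge_of_tendsto' htd hNbound
  have hW0 : ∀ᵐ x ∂μ, W x = 0 := (lintegral_eq_zero_iff hWmeas).mp hWint
  filter_upwards [ae_all_iff.2 claim, hW0] with x hx hWx
  have hLL0 : Filter.limsup (fun q : ℕ × ℕ =>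
      (‖(μ[f q.1|F q.2]) x - (μ[fstar|⨆ n, F n]) x‖₊ : ℝ≥0∞)) atTop = 0 :=
    le_antisymm (le_trans (le_iInf hx) hWx.le) zero_le
  have h1 : Tendsto (fun q : ℕ × ℕ =>
      (‖(μ[f q.1|F q.2]) x - (μ[fstar|⨆ n, F n]) x‖₊ : ℝ≥0∞)) atTop (𝓝 0) := by
    rw [ENNReal.tendsto_nhds_zero]
    intro ε hε
    exact (eventually_lt_of_limsup_lt (hLL0 ▸ hε)).mono fun q hq => hq.le
  have h2 : Tendsto (fun q : ℕ × ℕ => ‖(μ[f q.1|F q.2]) x - (μ[fstar|⨆ n, F n]) x‖)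
      atTop (𝓝 0) := by
    have h := (ENNReal.tendsto_toReal ENNReal.zero_ne_top).comp h1
    simpa [Function.comp_def] using h
  exact tendsto_iff_norm_sub_tendsto_zero.mpr h2
end

section
/- Let T on L_1(Ω, X) be induced by a measure-preserving endomorphism, X reflexive, f ∈ L_1(Ω, X), and suppose sup_n ‖S_n f‖_X ∈ L_1(Ω, ℝ). Let f* be the a.e. limit of S_n f. Then for a monotone increasing sequence of σ-subalgebras F_n ↑ F_∞, E(S_{n₁} f | F_{n₂}) converges almost everywhere to E(f* | F_∞) as n₁, n₂ → ∞ independently; moreover ∫ E(f* | F_∞) dμ = ∫ f dμ. -/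
open MeasureTheory Filter Topology
open scoped ENNReal NNReal

section Aux

variable {α : Type*} {X : Type*} [NormedAddCommGroup X]
  [NormedSpace ℝ X] [CompleteSpace X] {m : MeasurableSpace α} {m0 : MeasurableSpace α}
  {μ : MeasureTheory.Measure α} [IsFiniteMeasure μ]

lemma aux_sf (hm : m ≤ m0) : SigmaFinite (μ.trim hm) := by
  have := isFiniteMeasure_trim (μ := μ) hm
  infer_instance

/-- L¹ contraction property of the vector-valued conditional expectation. -/
lemma aux_integral_norm_condexp_le (hm : m ≤ m0) {g : α → X}
    (hg : Integrable g μ) :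
    ∫ ω, ‖(μ[g|m]) ω‖ ∂μ ≤ ∫ ω, ‖g ω‖ ∂μ := by
  haveI := aux_sf (μ := μ) hm
  have h1 : ∫ ω, ‖(μ[g|m]) ω‖ ∂μ = ‖condExpL1 hm μ g‖ := by
    rw [L1.norm_eq_integral_norm]
    refine integral_congr_ae ?_
    filter_upwards [condExp_ae_eq_condExpL1 hm g] with ω hω
    rw [hω]
  rw [h1, condExpL1_eq hg]
  calc ‖condExpL1CLM X hm μ (hg.toL1 g)‖ ≤ 1 * ‖hg.toL1 g‖ :=
        ContinuousLinearMap.le_of_opNorm_le _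
          (L1.norm_setToL1_le (dominatedFinMeasAdditive_condExpInd X hm μ) zero_le_one) _
    _ = ∫ ω, ‖g ω‖ ∂μ := by rw [one_mul, L1.norm_of_fun_eq_integral_norm]

/-- Pointwise a.e. norm inequality for the vector-valued conditional expectation. -/
lemma aux_norm_condexp_le (hm : m ≤ m0) {g : α → X} (hg : Integrable g μ) :
    ∀ᵐ ω ∂μ, ‖(μ[g|m]) ω‖ ≤ (μ[fun ω => ‖g ω‖|m]) ω := by
  haveI := aux_sf (μ := μ) hm
  have hAm : StronglyMeasurable[m] (fun ω => ‖(μ[g|m]) ω‖) := stronglyMeasurable_condExp.norm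
  have hBm : StronglyMeasurable[m] (μ[fun ω => ‖g ω‖|m]) := stronglyMeasurable_condExp
  have hAint : Integrable (fun ω => ‖(μ[g|m]) ω‖) μ := integrable_condExp.norm
  have hBint : Integrable (μ[fun ω => ‖g ω‖|m]) μ := integrable_condExp
  have hset : ∀ s, MeasurableSet[m] s →
      ∫ ω in s, ‖(μ[g|m]) ω‖ ∂μ ≤ ∫ ω in s, (μ[fun ω => ‖g ω‖|m]) ω ∂μ := by
    intro s hs
    have h2 : ∫ ω in s, (μ[fun ω => ‖g ω‖|m]) ω ∂μ = ∫ ω in s, ‖g ω‖ ∂μ :=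
      setIntegral_condExp hm hg.norm hs
    have h3 : ∫ ω in s, ‖(μ[g|m]) ω‖ ∂μ = ∫ ω, ‖(μ[s.indicator g|m]) ω‖ ∂μ := by
      rw [← integral_indicator (hm s hs)]
      refine integral_congr_ae ?_
      filter_upwards [condExp_indicator hg hs] with ω hω
      rw [hω, norm_indicator_eq_indicator_norm]
    rw [h2, h3]
    calc ∫ ω, ‖(μ[s.indicator g|m]) ω‖ ∂μ ≤ ∫ ω, ‖s.indicator g ω‖ ∂μ :=
          aux_integral_norm_condexp_le hm (hg.indicator (hm s hs))
      _ = ∫ ω in s, ‖g ω‖ ∂μ := by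
          rw [← integral_indicator (hm s hs)]
          refine integral_congr_ae (Eventually.of_forall fun ω => ?_)
          simp only [norm_indicator_eq_indicator_norm]
  refine ae_le_of_ae_le_trim (hm := hm) ?_
  refine ae_le_of_forall_setIntegral_le (hAint.trim hm hAm) (hBint.trim hm hBm) ?_
  intro s hs _
  rw [← setIntegral_trim hm hAm hs, ← setIntegral_trim hm hBm hs]
  exact hset s hs

/-- Conditional expectation of a real function times a constant vector. -/
lemma aux_condexp_smul_const (hm : m ≤ m0) {r : α → ℝ}
    (hr : Integrable r μ) (c : X) :
    μ[fun ω => r ω • c|m] =ᵐ[μ] fun ω => (μ[r|m]) ω • c := by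
  haveI := aux_sf (μ := μ) hm
  refine (ae_eq_condExp_of_forall_setIntegral_eq hm (hr.smul_const c)
    (fun s _ _ => (integrable_condExp.smul_const c).integrableOn)
    (fun s hs _ => ?_) ?_).symm
  · rw [integral_smul_const, integral_smul_const, setIntegral_condExp hm hr hs]
  · exact StronglyMeasurable.aestronglyMeasurable
      (stronglyMeasurable_condExp.smul (stronglyMeasurable_const (b := c)))

/-- If nonnegative integrable functions have summably small integrals,
they tend to zero almost everywhere. -/
lemma aux_tendsto_zero {u : ℕ → α → ℝ} (hu : ∀ k, Integrable (u k) μ)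
    (hnn : ∀ k, 0 ≤ᵐ[μ] u k) (hbd : ∀ k, ∫ ω, u k ω ∂μ ≤ (1/2 : ℝ) ^ k) :
    ∀ᵐ ω ∂μ, Tendsto (fun k => u k ω) atTop (𝓝 0) := by
  have hmeas : ∀ k, AEMeasurable (fun ω => ENNReal.ofReal (u k ω)) μ := fun k =>
    ENNReal.measurable_ofReal.comp_aemeasurable (hu k).aemeasurable
  have hlt : ∫⁻ ω, ∑' k, ENNReal.ofReal (u k ω) ∂μ ≠ ∞ := by
    rw [lintegral_tsum hmeas]
    have hEq : ∀ k, ∫⁻ ω, ENNReal.ofReal (u k ω) ∂μ = ENNReal.ofReal (∫ ω, u k ω ∂μ) :=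
      fun k => (ofReal_integral_eq_lintegral_ofReal (hu k) (hnn k)).symm
    have hb2 : ∑' (k : ℕ), ENNReal.ofReal ((1/2 : ℝ) ^ k) ≠ ∞ := by
      rw [← ENNReal.ofReal_tsum_of_nonneg (fun k => by positivity) summable_geometric_two]
      exact ENNReal.ofReal_ne_top
    refine ne_top_of_le_ne_top hb2 (ENNReal.tsum_le_tsum (fun k => ?_))
    rw [hEq k]
    exact ENNReal.ofReal_le_ofReal (hbd k)
  have hfin : ∀ᵐ ω ∂μ, ∑' k, ENNReal.ofReal (u k ω) < ∞ :=
    ae_lt_top' (AEMeasurable.ennreal_tsum hmeas) hlt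
  filter_upwards [hfin, ae_all_iff.2 hnn] with ω hω hωnn
  have h0 : Tendsto (fun k => ENNReal.ofReal (u k ω)) atTop (𝓝 0) :=
    ENNReal.tendsto_atTop_zero_of_tsum_ne_top hω.ne
  have h1 := (ENNReal.tendsto_toReal (show (0:ℝ≥0∞) ≠ ∞ by simp)).comp h0
  simp only [ENNReal.toReal_zero] at h1
  refine h1.congr fun k => ?_
  simp only [Function.comp_apply, ENNReal.toReal_ofReal (hωnn k)]

/-- Lévy's upward theorem for vector-valued functions. -/
lemma aux_levy (F : ℕ → MeasurableSpace α) (hle : ∀ n, F n ≤ m0)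
    (hmono : Monotone F) :
    ∀ {g : α → X}, Integrable g μ →
      ∀ᵐ ω ∂μ, Tendsto (fun n => (μ[g|F n]) ω) atTop (𝓝 ((μ[g|⨆ n, F n]) ω)) := by
  have hsle : (⨆ n, F n) ≤ m0 := iSup_le hle
  have levyR : ∀ r : α → ℝ, ∀ᵐ ω ∂μ,
      Tendsto (fun n => (μ[r|F n]) ω) atTop (𝓝 ((μ[r|⨆ n, F n]) ω)) := by
    intro r
    exact MeasureTheory.tendsto_ae_condExp (ℱ := (⟨F, hmono, hle⟩ : Filtration ℕ _)) (μ := μ) r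
  refine Integrable.induction (P := fun g : α → X => ∀ᵐ ω ∂μ,
    Tendsto (fun n => (μ[g|F n]) ω) atTop (𝓝 ((μ[g|⨆ n, F n]) ω))) ?_ ?_ ?_ ?_
  · -- indicator of a constant
    intro c s hs hμs
    have hr : Integrable (s.indicator fun _ => (1:ℝ)) μ := (integrable_const 1).indicator hs
    have heq : (s.indicator fun _ => c) = fun ω => (s.indicator (fun _ => (1:ℝ)) ω) • c := by
      funext ω
      by_cases hω : ω ∈ s <;> simp [Set.indicator_apply, hω]
    rw [heq]
    filter_upwards [levyR (s.indicator fun _ => (1:ℝ)),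
      ae_all_iff.2 (fun n => aux_condexp_smul_const (hle n) hr c),
      aux_condexp_smul_const hsle hr c] with ω h1 h2 h3
    rw [h3]
    exact (h1.smul_const c).congr fun n => (h2 n).symm
  · -- addition
    intro f1 f2 _ hf1 hf2 hP1 hP2
    filter_upwards [hP1, hP2, ae_all_iff.2 (fun n => condExp_add hf1 hf2 (m := F n)),
      condExp_add hf1 hf2 (m := ⨆ n, F n)] with ω h1 h2 h3 h4
    rw [h4, Pi.add_apply]
    exact (h1.add h2).congr fun n => by rw [h3 n, Pi.add_apply]
  · -- closed in L¹
    refine IsSeqClosed.isClosed ?_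
    intro x p hx hxp
    have hj : ∀ k : ℕ, ∃ i, dist (x i) p < (1/2 : ℝ) ^ k := fun k =>
      ((Metric.tendsto_atTop.mp hxp ((1/2) ^ k) (by positivity)).imp fun N hN => hN N le_rfl)
    choose j hj using hj
    have hpint : Integrable (⇑p) μ := L1.integrable_coeFn p
    have hvint : ∀ k, Integrable (⇑(x (j k))) μ := fun k => L1.integrable_coeFn _
    have hdint : ∀ k, Integrable (⇑p - ⇑(x (j k))) μ := fun k => hpint.sub (hvint k)
    have hnint : ∀ k, Integrable (fun ω => ‖(⇑p - ⇑(x (j k))) ω‖) μ := fun k => (hdint k).norm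
    have hIbd : ∀ k, ∫ ω, ‖(⇑p - ⇑(x (j k))) ω‖ ∂μ ≤ (1/2 : ℝ) ^ k := by
      intro k
      have hdd : ∫ ω, ‖(⇑p - ⇑(x (j k))) ω‖ ∂μ = dist p (x (j k)) := by
        rw [L1.dist_eq_integral_dist]
        refine integral_congr_ae (Eventually.of_forall fun ω => ?_)
        simp only [Pi.sub_apply, dist_eq_norm]
      rw [hdd, dist_comm]
      exact (hj k).le
    have hzero : ∀ᵐ ω ∂μ,
        Tendsto (fun k => (μ[fun ω => ‖(⇑p - ⇑(x (j k))) ω‖|⨆ n, F n]) ω) atTop (𝓝 0) := by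
      refine aux_tendsto_zero (fun k => integrable_condExp)
        (fun k => condExp_nonneg (Eventually.of_forall fun ω => norm_nonneg _)) (fun k => ?_)
      rw [integral_condExp hsle]
      exact hIbd k
    have hlevyh : ∀ k, ∀ᵐ ω ∂μ,
        Tendsto (fun n => (μ[fun ω => ‖(⇑p - ⇑(x (j k))) ω‖|F n]) ω) atTop
          (𝓝 ((μ[fun ω => ‖(⇑p - ⇑(x (j k))) ω‖|⨆ n, F n]) ω)) :=
      fun k => levyR _
    have hnormF : ∀ k n, ∀ᵐ ω ∂μ,
        ‖(μ[⇑p - ⇑(x (j k))|F n]) ω‖ ≤ (μ[fun ω => ‖(⇑p - ⇑(x (j k))) ω‖|F n]) ω :=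
      fun k n => aux_norm_condexp_le (hle n) (hdint k)
    have hnormS : ∀ k, ∀ᵐ ω ∂μ,
        ‖(μ[⇑p - ⇑(x (j k))|⨆ n, F n]) ω‖ ≤ (μ[fun ω => ‖(⇑p - ⇑(x (j k))) ω‖|⨆ n, F n]) ω :=
      fun k => aux_norm_condexp_le hsle (hdint k)
    have hsubF : ∀ k n, μ[⇑p - ⇑(x (j k))|F n] =ᵐ[μ] μ[⇑p|F n] - μ[⇑(x (j k))|F n] :=
      fun k n => condExp_sub hpint (hvint k) _
    have hsubS : ∀ k, μ[⇑p - ⇑(x (j k))|⨆ n, F n] =ᵐ[μ] μ[⇑p|⨆ n, F n] - μ[⇑(x (j k))|⨆ n, F n] :=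
      fun k => condExp_sub hpint (hvint k) _
    filter_upwards [ae_all_iff.2 (fun k : ℕ => hx (j k)), hzero,
      ae_all_iff.2 hlevyh,
      ae_all_iff.2 (fun k => ae_all_iff.2 (hnormF k)),
      ae_all_iff.2 hnormS,
      ae_all_iff.2 (fun k => ae_all_iff.2 (hsubF k)),
      ae_all_iff.2 hsubS] with ω hP hz hlev hnF hnS hsF hsS
    rw [Metric.tendsto_atTop]
    intro ε hε
    obtain ⟨k, hk4⟩ := (hz.eventually (gt_mem_nhds (show (0:ℝ) < ε/4 by linarith))).exists
    obtain ⟨N1, hN1⟩ := Metric.tendsto_atTop.mp (hlev k) (ε/4) (by linarith)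
    obtain ⟨N2, hN2⟩ := Metric.tendsto_atTop.mp (hP k) (ε/4) (by linarith)
    refine ⟨max N1 N2, fun n hn => ?_⟩
    have h1 : dist ((μ[⇑p|F n]) ω) ((μ[⇑(x (j k))|F n]) ω)
        ≤ (μ[fun ω => ‖(⇑p - ⇑(x (j k))) ω‖|F n]) ω := by
      rw [dist_eq_norm, ← Pi.sub_apply (μ[⇑p|F n]), ← hsF k n]
      exact hnF k n
    have h2 : (μ[fun ω => ‖(⇑p - ⇑(x (j k))) ω‖|F n]) ω < ε/2 := by
      have hd := hN1 n (le_trans (le_max_left _ _) hn)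
      rw [Real.dist_eq] at hd
      have := abs_lt.mp hd
      linarith
    have h3 : dist ((μ[⇑(x (j k))|F n]) ω) ((μ[⇑(x (j k))|⨆ n, F n]) ω) < ε/4 :=
      hN2 n (le_trans (le_max_right _ _) hn)
    have h4 : dist ((μ[⇑(x (j k))|⨆ n, F n]) ω) ((μ[⇑p|⨆ n, F n]) ω)
        ≤ (μ[fun ω => ‖(⇑p - ⇑(x (j k))) ω‖|⨆ n, F n]) ω := by
      rw [dist_comm, dist_eq_norm, ← Pi.sub_apply (μ[⇑p|⨆ n, F n]), ← hsS k]
      exact hnS k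
    calc dist ((μ[⇑p|F n]) ω) ((μ[⇑p|⨆ n, F n]) ω)
        ≤ dist ((μ[⇑p|F n]) ω) ((μ[⇑(x (j k))|F n]) ω)
          + dist ((μ[⇑(x (j k))|F n]) ω) ((μ[⇑(x (j k))|⨆ n, F n]) ω)
          + dist ((μ[⇑(x (j k))|⨆ n, F n]) ω) ((μ[⇑p|⨆ n, F n]) ω) := dist_triangle4 _ _ _ _
      _ < ε := by
          have e1 := h1.trans_lt h2
          have e4 := h4.trans_lt hk4
          linarith
  · -- ae congruence
    intro f1 f2 hff hf1 hP
    filter_upwards [hP, ae_all_iff.2 (fun n => condExp_congr_ae (m := F n) hff),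
      condExp_congr_ae (m := ⨆ n, F n) hff] with ω h1 h2 h3
    rw [← h3]
    exact h1.congr fun n => h2 n

end Aux

/-- Birkhoff (Cesàro) ergodic averages `S_n f = (1/n) ∑_{i<n} f ∘ τ^i`. -/
noncomputable def birkhoff {Ω X : Type*} [AddCommMonoid X] [Module ℝ X]
    (τ : Ω → Ω) (f : Ω → X) (n : ℕ) : Ω → X :=
  fun ω => (n : ℝ)⁻¹ • ∑ i ∈ Finset.range n, f (τ^[i] ω)

/-- For `T` induced by a measure-preserving endomorphism, `f ∈ L₁(Ω, X)` with
`sup_n ‖S_n f‖_X ∈ L₁`, `fstar` the a.e. limit of `S_n f`, and `F n ↑ Finf` increasing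
σ-subalgebras, `E(S_{n₁} f | F_{n₂}) → E(fstar | Finf)` a.e. as `n₁, n₂ → ∞` independently,
and `∫ E(fstar|Finf) dμ = ∫ f dμ`. -/
theorem stmt5 {Ω X : Type*} [MeasurableSpace Ω] [NormedAddCommGroup X] [NormedSpace ℝ X]
    [CompleteSpace X]
    (hX : Function.Surjective (NormedSpace.inclusionInDoubleDual ℝ X))
    (μ : Measure Ω) [IsFiniteMeasure μ]
    (τ : Ω → Ω) (hτ : MeasurePreserving τ μ μ)
    (f : Ω → X) (hf : Integrable f μ)
    (hsup : Integrable (fun ω => ⨆ n, ‖birkhoff τ f n ω‖) μ)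
    (fstar : Ω → X) (hfstar : Integrable fstar μ)
    (hlim : ∀ᵐ ω ∂μ, Tendsto (fun n => birkhoff τ f n ω) atTop (𝓝 (fstar ω)))
    (F : ℕ → MeasurableSpace Ω) (hle : ∀ n, F n ≤ ‹MeasurableSpace Ω›)
    (hmono : Monotone F)
    (Finf : MeasurableSpace Ω) (hFinf : Finf = ⨆ n, F n) :
    (∀ᵐ ω ∂μ, Tendsto (fun q : ℕ × ℕ => (μ[birkhoff τ f q.1 | F q.2]) ω) atTop
      (𝓝 ((μ[fstar | Finf]) ω))) ∧
    ∫ ω, (μ[fstar | Finf]) ω ∂μ = ∫ ω, f ω ∂μ := by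
  subst hFinf
  have hsle : (⨆ n, F n) ≤ ‹MeasurableSpace Ω› := iSup_le hle
  haveI := aux_sf (μ := μ) hsle
  -- integrability of Birkhoff averages
  have hcomp : ∀ i : ℕ, Integrable (fun ω => f (τ^[i] ω)) μ := fun i =>
    ((hτ.iterate i).integrable_comp hf.aestronglyMeasurable).mpr hf
  have hb : ∀ n, Integrable (birkhoff τ f n) μ := fun n => by
    unfold birkhoff; simpa [Pi.smul_def] using
      ((integrable_finset_sum (Finset.range n) (fun i _ => hcomp i)).smul ((n:ℝ)⁻¹))
  -- the integral of each Birkhoff average (n ≥ 1) is ∫ f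
  have hIcomp : ∀ i : ℕ, ∫ ω, f (τ^[i] ω) ∂μ = ∫ ω, f ω ∂μ := by
    intro i
    have h := integral_map (hτ.iterate i).measurable.aemeasurable
      (f := f) (by rw [(hτ.iterate i).map_eq]; exact hf.aestronglyMeasurable)
    rw [(hτ.iterate i).map_eq] at h
    exact h.symm
  have hSint : ∀ n, 1 ≤ n → ∫ ω, birkhoff τ f n ω ∂μ = ∫ ω, f ω ∂μ := by
    intro n hn
    have h1 : ∫ ω, birkhoff τ f n ω ∂μ
        = (n:ℝ)⁻¹ • ∑ i ∈ Finset.range n, ∫ ω, f (τ^[i] ω) ∂μ := by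
      simp only [birkhoff]
      rw [integral_smul, integral_finset_sum _ (fun i _ => hcomp i)]
    rw [h1]
    simp only [hIcomp]
    rw [Finset.sum_const, Finset.card_range, ← Nat.cast_smul_eq_nsmul ℝ, smul_smul,
      inv_mul_cancel₀ (by exact_mod_cast Nat.one_le_iff_ne_zero.mp hn), one_smul]
  -- ∫ fstar = ∫ f by dominated convergence
  have hbdd : ∀ᵐ ω ∂μ, ∀ n, ‖birkhoff τ f n ω‖ ≤ ⨆ m, ‖birkhoff τ f m ω‖ := by
    filter_upwards [hlim] with ω hω
    exact fun n => le_ciSup hω.norm.bddAbove_range n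
  have htendI : Tendsto (fun n => ∫ ω, birkhoff τ f n ω ∂μ) atTop (𝓝 (∫ ω, fstar ω ∂μ)) :=
    tendsto_integral_of_dominated_convergence _ (fun n => (hb n).aestronglyMeasurable) hsup
      (fun n => hbdd.mono fun ω h => h n) hlim
  have hfeq : ∫ ω, fstar ω ∂μ = ∫ ω, f ω ∂μ := by
    refine tendsto_nhds_unique (htendI.congr' ?_) tendsto_const_nhds
    filter_upwards [eventually_ge_atTop 1] with n hn using hSint n hn
  -- tail suprema G N
  set G : ℕ → Ω → ℝ := fun N ω => ⨆ m, ‖birkhoff τ f (m + N) ω - fstar ω‖ with hG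
  have hGm : ∀ N, AEStronglyMeasurable (G N) μ := fun N =>
    (AEMeasurable.iSup fun m =>
      (((hb (m + N)).aestronglyMeasurable.sub hfstar.aestronglyMeasurable).norm).aemeasurable
      ).aestronglyMeasurable
  have hGprop : ∀ᵐ ω ∂μ, (∀ N n, N ≤ n → ‖birkhoff τ f n ω - fstar ω‖ ≤ G N ω)
      ∧ (∀ N, 0 ≤ G N ω) ∧ Tendsto (fun N => G N ω) atTop (𝓝 0)
      ∧ (∀ N, G N ω ≤ (⨆ m, ‖birkhoff τ f m ω‖) + ‖fstar ω‖) := by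
    filter_upwards [hlim] with ω hω
    have t0 : Tendsto (fun n => ‖birkhoff τ f n ω - fstar ω‖) atTop (𝓝 0) := by
      have := (hω.sub (tendsto_const_nhds (x := fstar ω))).norm
      simpa using this
    have hbddN : ∀ N, BddAbove (Set.range fun m => ‖birkhoff τ f (m + N) ω - fstar ω‖) :=
      fun N => (t0.comp (tendsto_add_atTop_nat N)).bddAbove_range
    refine ⟨?_, ?_, ?_, ?_⟩
    · intro N n hNn
      have h := le_ciSup (hbddN N) (n - N)
      rwa [Nat.sub_add_cancel hNn] at h
    · exact fun N => (norm_nonneg _).trans (le_ciSup (hbddN N) 0)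
    · rw [Metric.tendsto_atTop]
      intro ε hε
      obtain ⟨M, hM⟩ := Metric.tendsto_atTop.mp t0 (ε/2) (by linarith)
      refine ⟨M, fun N hN => ?_⟩
      have hle2 : G N ω ≤ ε/2 := by
        refine ciSup_le fun m => ?_
        have hm := hM (m + N) (le_trans hN (Nat.le_add_left N m))
        rw [Real.dist_eq, sub_zero, abs_norm] at hm
        exact hm.le
      have h0 : 0 ≤ G N ω := (norm_nonneg _).trans (le_ciSup (hbddN N) 0)
      rw [Real.dist_eq, sub_zero, abs_of_nonneg h0]
      linarith
    · intro N
      refine ciSup_le fun m => ?_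
      have h1 : ‖birkhoff τ f (m + N) ω‖ ≤ ⨆ m, ‖birkhoff τ f m ω‖ :=
        le_ciSup hω.norm.bddAbove_range (m + N)
      calc ‖birkhoff τ f (m + N) ω - fstar ω‖
          ≤ ‖birkhoff τ f (m + N) ω‖ + ‖fstar ω‖ := norm_sub_le _ _
        _ ≤ (⨆ m, ‖birkhoff τ f m ω‖) + ‖fstar ω‖ := by linarith
  have hGint : ∀ N, Integrable (G N) μ := fun N =>
    Integrable.mono' (hsup.add hfstar.norm) (hGm N)
      (hGprop.mono fun ω h => by
        rw [Real.norm_eq_abs, abs_of_nonneg (h.2.1 N)]; exact h.2.2.2 N)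
  have hGto0int : Tendsto (fun N => ∫ ω, G N ω ∂μ) atTop (𝓝 0) := by
    have := tendsto_integral_of_dominated_convergence
      (F := G) (f := fun _ => (0:ℝ)) (fun ω => (⨆ m, ‖birkhoff τ f m ω‖) + ‖fstar ω‖)
      (fun N => hGm N) (hsup.add hfstar.norm)
      (fun N => hGprop.mono fun ω h => by
        rw [Real.norm_eq_abs, abs_of_nonneg (h.2.1 N)]; exact h.2.2.2 N)
      (hGprop.mono fun ω h => h.2.2.1)
    simpa using this
  -- subsequence of N's with small integrals
  have hNk : ∀ k : ℕ, ∃ N, ∫ ω, G N ω ∂μ < (1/2 : ℝ) ^ k := fun k =>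
    (hGto0int.eventually (gt_mem_nhds (show (0:ℝ) < (1/2)^k by positivity))).exists
  choose NN hNN using hNk
  have hE4 : ∀ᵐ ω ∂μ, Tendsto (fun k => (μ[G (NN k)|⨆ n, F n]) ω) atTop (𝓝 0) := by
    refine aux_tendsto_zero (fun k => integrable_condExp)
      (fun k => condExp_nonneg (hGprop.mono fun ω h => h.2.1 (NN k))) (fun k => ?_)
    rw [integral_condExp hsle]
    exact (hNN k).le
  -- key inequality
  have hkey : ∀ᵐ ω ∂μ, ∀ N n₁ n₂, N ≤ n₁ →
      ‖(μ[birkhoff τ f n₁|F n₂]) ω - (μ[fstar|F n₂]) ω‖ ≤ (μ[G N|F n₂]) ω := by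
    rw [ae_all_iff]; intro N
    rw [ae_all_iff]; intro n₁
    rw [ae_all_iff]; intro n₂
    by_cases hNn : N ≤ n₁
    · have hpt : (fun ω => ‖(birkhoff τ f n₁ - fstar) ω‖) ≤ᵐ[μ] G N :=
        hGprop.mono fun ω h => by simpa using h.1 N n₁ hNn
      filter_upwards [condExp_sub (hb n₁) hfstar (m := F n₂),
        aux_norm_condexp_le (hle n₂) ((hb n₁).sub hfstar),
        condExp_mono ((hb n₁).sub hfstar).norm (hGint N) hpt (m := F n₂)] with ω h1 h2 h3 _
      calc ‖(μ[birkhoff τ f n₁|F n₂]) ω - (μ[fstar|F n₂]) ω‖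
          = ‖(μ[birkhoff τ f n₁ - fstar|F n₂]) ω‖ := by rw [h1, Pi.sub_apply]
        _ ≤ (μ[fun ω => ‖(birkhoff τ f n₁ - fstar) ω‖|F n₂]) ω := h2
        _ ≤ (μ[G N|F n₂]) ω := h3
    · filter_upwards with ω h
      exact absurd h hNn
  -- Lévy convergence statements
  have hE2 : ∀ k, ∀ᵐ ω ∂μ, Tendsto (fun n => (μ[G (NN k)|F n]) ω) atTop
      (𝓝 ((μ[G (NN k)|⨆ n, F n]) ω)) := fun k =>
    MeasureTheory.tendsto_ae_condExp (ℱ := (⟨F, hmono, hle⟩ : Filtration ℕ _)) (μ := μ) _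
  have hE3 : ∀ᵐ ω ∂μ, Tendsto (fun n => (μ[fstar|F n]) ω) atTop
      (𝓝 ((μ[fstar|⨆ n, F n]) ω)) := aux_levy F hle hmono hfstar
  constructor
  · filter_upwards [hkey, ae_all_iff.2 hE2, hE3, hE4] with ω hk2 h2 h3 h4
    rw [Metric.tendsto_nhds]
    intro ε hε
    obtain ⟨k, hk4⟩ := (h4.eventually (gt_mem_nhds (show (0:ℝ) < ε/4 by linarith))).exists
    obtain ⟨N1, hN1⟩ := Metric.tendsto_atTop.mp (h2 k) (ε/4) (by linarith)
    obtain ⟨N2, hN2⟩ := Metric.tendsto_atTop.mp h3 (ε/2) (by linarith)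
    rw [eventually_atTop]
    refine ⟨(NN k, max N1 N2), ?_⟩
    rintro ⟨n₁, n₂⟩ hq
    obtain ⟨hq1, hq2⟩ := Prod.le_def.mp hq
    simp only at hq1 hq2
    have hGsmall : (μ[G (NN k)|F n₂]) ω < ε/2 := by
      have hd := hN1 n₂ (le_trans (le_max_left _ _) hq2)
      rw [Real.dist_eq] at hd
      have := abs_lt.mp hd
      linarith
    have hd1 : dist ((μ[birkhoff τ f n₁|F n₂]) ω) ((μ[fstar|F n₂]) ω) < ε/2 := by
      rw [dist_eq_norm]
      exact (hk2 (NN k) n₁ n₂ hq1).trans_lt hGsmall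
    have hd2 : dist ((μ[fstar|F n₂]) ω) ((μ[fstar|⨆ n, F n]) ω) < ε/2 :=
      hN2 n₂ (le_trans (le_max_right _ _) hq2)
    calc dist ((μ[birkhoff τ f n₁|F n₂]) ω) ((μ[fstar|⨆ n, F n]) ω)
        ≤ dist ((μ[birkhoff τ f n₁|F n₂]) ω) ((μ[fstar|F n₂]) ω)
          + dist ((μ[fstar|F n₂]) ω) ((μ[fstar|⨆ n, F n]) ω) := dist_triangle _ _ _
      _ < ε := by linarith
  · rw [integral_condExp hsle, hfeq]
end
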